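/- Let 0 < m < M, let f : [m,M] → (0,∞) be convex and decreasing, and let v ∈ [0,1]. Define K = max over t ∈ [m,M] of (a_f·t + b_f)/f(t), where a_f = (f(M)-f(m))/(M-m) and b_f = (M·f(m)-m·f(M))/(M-m). Then for all a, b ∈ [m, M]: (1-v)·f(a) + v·f(b) ≤ K · f((1-v)·a + v·b). -/

import Mathlib

theorem mond_pecaric_convex_decreasing (m M : ℝ) (hm : 0 < m) (hmM : m < M)
    (f : ℝ → ℝ) (hfpos : ∀ t ∈ Set.Icc m M, 0 < f t)
    (hconv : ConvexOn ℝ (Set.Icc m M) f) (hdec : AntitoneOn f (Set.Icc m M))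
    (v : ℝ) (hv0 : 0 ≤ v) (hv1 : v ≤ 1) (K : ℝ)
    (hK : IsGreatest
      ((fun t => (((f M - f m) / (M - m)) * t + (M * f m - m * f M) / (M - m)) / f t) ''
        Set.Icc m M) K)
    (a b : ℝ) (ha : a ∈ Set.Icc m M) (hb : b ∈ Set.Icc m M) :
    (1 - v) * f a + v * f b ≤ K * f ((1 - v) * a + v * b) := by
  have hMm : (0 : ℝ) < M - m := by linarith
  set L : ℝ → ℝ := fun t => ((f M - f m) / (M - m)) * t + (M * f m - m * f M) / (M - m)
    with hL
  -- f ≤ L on [m, M]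
  have hfle : ∀ t ∈ Set.Icc m M, f t ≤ L t := by
    intro t ht
    obtain ⟨htm, htM⟩ := ht
    set s : ℝ := (t - m) / (M - m) with hs
    have hs0 : 0 ≤ s := div_nonneg (by linarith) hMm.le
    have hs1 : s ≤ 1 := by
      rw [div_le_one hMm]; linarith
    have hts : t = (1 - s) * m + s * M := by
      have h : s * (M - m) = t - m := by rw [hs]; exact div_mul_cancel₀ (t - m) hMm.ne'
      linear_combination -h
    have := hconv.2 (Set.left_mem_Icc.mpr hmM.le) (Set.right_mem_Icc.mpr hmM.le)
      (by linarith : (0:ℝ) ≤ 1 - s) hs0 (by ring)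
    simp only [smul_eq_mul] at this
    calc f t = f ((1 - s) * m + s * M) := by rw [← hts]
    _ ≤ (1 - s) * f m + s * f M := this
    _ = L t := by
        simp only [hL, hs]; field_simp; ring
  set c : ℝ := (1 - v) * a + v * b with hc
  have hcmem : c ∈ Set.Icc m M := by
    constructor
    · nlinarith [ha.1, hb.1]
    · nlinarith [ha.2, hb.2]
  have hfc : 0 < f c := hfpos c hcmem
  have hKc : L c / f c ≤ K := hK.2 ⟨c, hcmem, rfl⟩
  have hLc : L c ≤ K * f c := (div_le_iff₀ hfc).mp hKc
  have h1 : (1 - v) * f a + v * f b ≤ (1 - v) * L a + v * L b := by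
    have := hfle a ha
    have := hfle b hb
    nlinarith
  have h2 : (1 - v) * L a + v * L b = L c := by simp only [hL, hc]; ring
  linarith
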